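/- (Harvey-type criterion) With notation as in the counting formula, |Epi_S(Γ, Z/nZ)| > 0 if and only if: (i) 𝔫 | n, and if g = 0 then 𝔫 = n; (ii) e_p > 1 for every prime p | 𝔫; (iii) if 𝔫 is even then e_2 is even; where e_p = #{i : p ∤ 𝔫/n_i}. -/

import Mathlib

lemma skeiff_term (p m : ℕ) (hp : p.Prime) :
    (1 - (-1:ℚ)^m / ((p:ℚ)-1)^m ≠ 0) ↔ (1 ≤ m ∧ (p = 2 → Odd m)) := by
  have h2 : (2:ℕ) ≤ p := hp.two_le
  have hp1 : (1:ℚ) ≤ (p:ℚ) - 1 := by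
    have : (2:ℚ) ≤ (p:ℚ) := by exact_mod_cast h2
    linarith
  have hpm : (0:ℚ) < ((p:ℚ)-1)^m := pow_pos (by linarith) m
  rw [Ne, sub_eq_zero, eq_comm, div_eq_one_iff_eq hpm.ne']
  rcases Nat.eq_zero_or_pos m with hm | hm
  · subst hm; simp
  · by_cases hp2 : p = 2
    · subst hp2
      have h1 : ((2:ℕ):ℚ) - 1 = 1 := by norm_num
      rw [h1, one_pow]
      constructor
      · intro h
        refine ⟨hm, fun _ => ?_⟩
        rcases Nat.even_or_odd m with he | ho
        · exact absurd he.neg_one_pow h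
        · exact ho
      · rintro ⟨-, h⟩ heq
        rw [(h rfl).neg_one_pow] at heq
        norm_num at heq
    · have hgt : (1:ℚ) < ((p:ℚ)-1)^m := by
        have h3 : (3:ℕ) ≤ p := by omega
        have h3' : (3:ℚ) ≤ (p:ℚ) := by exact_mod_cast h3
        calc (1:ℚ) < 2 ^ m := one_lt_pow₀ (by norm_num) hm.ne'
        _ ≤ ((p:ℚ)-1)^m := pow_le_pow_left₀ (by norm_num) (by linarith) m
      constructor
      · intro _; exact ⟨hm, fun h => absurd h hp2⟩
      · rintro ⟨-, -⟩ heq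
        rcases Nat.even_or_odd m with he | ho
        · rw [he.neg_one_pow] at heq; linarith
        · rw [ho.neg_one_pow] at heq; linarith

lemma skeiff_parity {e : ℕ} : (1 ≤ e - 1 ∧ Odd (e - 1)) ↔ (2 ≤ e ∧ Even e) := by
  simp only [Nat.odd_iff, Nat.even_iff]
  omega

/-- Harvey-type criterion: given the counting formula for the number `E` of surface-kernel
epimorphisms from the co-compact Fuchsian group with signature `(g; n_1,…,n_k)` to `ℤ/nℤ`
(and `E = 0` when `𝔫 ∤ n`), one has `E > 0` iff (i) `𝔫 ∣ n` and `g = 0 → 𝔫 = n`;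
(ii) `e_p > 1` for every prime `p ∣ 𝔫`; (iii) if `𝔫` is even then `e_2` is even;
where `𝔫 = lcm(n_1,…,n_k)` and `e_p = #{i : p ∤ 𝔫/n_i}`. -/
theorem surface_kernel_epi_exists_iff (g k n : ℕ) (hn : 0 < n) (nn : Fin k → ℕ)
    (hnn : ∀ i, 0 < nn i) (E : ℕ)
    (hE0 : ¬ Finset.univ.lcm nn ∣ n → E = 0)
    (hE : Finset.univ.lcm nn ∣ n → (E : ℚ) =
      (n : ℚ) ^ (2 * g) / ((Finset.univ.lcm nn : ℕ) : ℚ) *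
        (∏ i, (Nat.totient (nn i) : ℚ)) *
        (∏ p ∈ (n / Finset.univ.lcm nn).primeFactors, (1 - 1 / (p : ℚ) ^ (2 * g))) *
        ∏ p ∈ (Finset.univ.lcm nn).primeFactors,
          (1 - (-1 : ℚ) ^ ((Finset.univ.filter
              (fun i => ¬ p ∣ Finset.univ.lcm nn / nn i)).card - 1) /
            ((p : ℚ) - 1) ^ ((Finset.univ.filter
              (fun i => ¬ p ∣ Finset.univ.lcm nn / nn i)).card - 1))) :
    0 < E ↔
      ((Finset.univ.lcm nn ∣ n ∧ (g = 0 → Finset.univ.lcm nn = n)) ∧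
        (∀ p : ℕ, p.Prime → p ∣ Finset.univ.lcm nn →
          1 < (Finset.univ.filter (fun i => ¬ p ∣ Finset.univ.lcm nn / nn i)).card) ∧
        (Even (Finset.univ.lcm nn) →
          Even (Finset.univ.filter (fun i => ¬ 2 ∣ Finset.univ.lcm nn / nn i)).card)) := by
  classical
  set L := Finset.univ.lcm nn with hLdef
  have hL0 : L ≠ 0 := by
    intro h
    rw [hLdef, Finset.lcm_eq_zero_iff] at h
    obtain ⟨i, -, hi⟩ := h
    exact (hnn i).ne' hi
  have hev : Even L ↔ 2 ∣ L :=
    ⟨fun ⟨r, hr⟩ => ⟨r, by omega⟩, fun ⟨r, hr⟩ => ⟨r, by omega⟩⟩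
  by_cases hdvd : L ∣ n
  · have hEq := hE hdvd
    rw [Nat.pos_iff_ne_zero, ← Nat.cast_ne_zero (R := ℚ), hEq,
      mul_ne_zero_iff, mul_ne_zero_iff, mul_ne_zero_iff]
    have hA : (n : ℚ) ^ (2 * g) / (L : ℚ) ≠ 0 :=
      div_ne_zero (pow_ne_zero _ (by exact_mod_cast hn.ne')) (by exact_mod_cast hL0)
    have hT : (∏ i, (Nat.totient (nn i) : ℚ)) ≠ 0 := by
      rw [Finset.prod_ne_zero_iff]
      intro i _
      exact_mod_cast (Nat.totient_pos.mpr (hnn i)).ne'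
    have hnL0 : n / L ≠ 0 :=
      (Nat.div_pos (Nat.le_of_dvd hn hdvd) (Nat.pos_of_ne_zero hL0)).ne'
    have hB : (∏ p ∈ (n / L).primeFactors, (1 - 1 / (p : ℚ) ^ (2 * g))) ≠ 0 ↔
        (g = 0 → L = n) := by
      rw [Finset.prod_ne_zero_iff]
      constructor
      · intro h hg
        by_contra hne
        have h1 : n / L ≠ 1 := by
          intro h1
          have hmul := Nat.div_mul_cancel hdvd
          rw [h1, one_mul] at hmul
          exact hne hmul
        obtain ⟨p, pp, pd⟩ := Nat.exists_prime_and_dvd h1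
        have := h p (Nat.mem_primeFactors.mpr ⟨pp, pd, hnL0⟩)
        simp [hg] at this
      · intro h p hp
        have pp : p.Prime := Nat.prime_of_mem_primeFactors hp
        by_cases hg : g = 0
        · exfalso
          have hLn := h hg
          rw [hLn, Nat.div_self hn] at hp
          simp at hp
        · have h1 : (1:ℚ) < (p:ℚ) ^ (2 * g) :=
            one_lt_pow₀ (by exact_mod_cast pp.one_lt) (by omega)
          intro h0
          rw [sub_eq_zero] at h0
          have : 1 / (p:ℚ) ^ (2*g) < 1 := by
            rw [div_lt_one (by linarith)]; exact h1
          rw [← h0] at this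
          linarith
    have hC : (∏ p ∈ L.primeFactors,
        (1 - (-1 : ℚ) ^ ((Finset.univ.filter (fun i => ¬ p ∣ L / nn i)).card - 1) /
          ((p : ℚ) - 1) ^ ((Finset.univ.filter (fun i => ¬ p ∣ L / nn i)).card - 1))) ≠ 0 ↔
        ∀ p ∈ L.primeFactors,
          2 ≤ (Finset.univ.filter (fun i => ¬ p ∣ L / nn i)).card ∧
          (p = 2 → Even (Finset.univ.filter (fun i => ¬ p ∣ L / nn i)).card) := by
      rw [Finset.prod_ne_zero_iff]
      refine forall₂_congr fun p hp => ?_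
      rw [skeiff_term p _ (Nat.prime_of_mem_primeFactors hp)]
      constructor
      · rintro ⟨h1, h2⟩
        by_cases hp2 : p = 2
        · have := skeiff_parity.mp ⟨h1, h2 hp2⟩
          exact ⟨this.1, fun _ => this.2⟩
        · refine ⟨?_, fun h => absurd h hp2⟩
          omega
      · rintro ⟨h1, h2⟩
        refine ⟨by omega, fun hp2 => (skeiff_parity.mpr ⟨h1, h2 hp2⟩).2⟩
    rw [hB, hC]
    constructor
    · rintro ⟨⟨⟨-, -⟩, hB'⟩, hC'⟩
      refine ⟨⟨hdvd, hB'⟩, ?_, ?_⟩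
      · intro p pp pd
        exact (hC' p (Nat.mem_primeFactors.mpr ⟨pp, pd, hL0⟩)).1
      · intro hEvenL
        exact (hC' 2 (Nat.mem_primeFactors.mpr ⟨Nat.prime_two, hev.mp hEvenL, hL0⟩)).2 rfl
    · rintro ⟨⟨-, hgn⟩, hii, hiii⟩
      refine ⟨⟨⟨hA, hT⟩, hgn⟩, ?_⟩
      intro p hp
      obtain ⟨pp, pd, -⟩ := Nat.mem_primeFactors.mp hp
      refine ⟨hii p pp pd, fun hp2 => ?_⟩
      subst hp2
      exact hiii (hev.mpr pd)
  · simp [hE0 hdvd, hdvd]
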